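/- For every real η > 0, every integer n ≥ 2, and every s ∈ S_n⁻, the maximum-likelihood estimate satisfies P[â_ML(U₁ⁿ) − a < −η] ≤ ∏_{ℓ=1}^{n−1} (1 − 2σ²β_ℓ)^{−1/2}; equivalently, −(1/n)·log P[â_ML(U₁ⁿ) − a < −η] ≥ sup_{s ∈ S_n⁻} (1/(2n)) Σ_{ℓ=1}^{n−1} log(1 − 2σ²β_ℓ). -/

import Mathlib

open MeasureTheory ProbabilityTheory Finset

/-- The sequence `β_ℓ` from the paper: `β₁ = (σ²s² − 2ηs)/2` and
`β_ℓ = ([a² + 2σ²s(−a+η)]·β_{ℓ−1} + β₁)/(1 − 2σ²β_{ℓ−1})` for `ℓ ≥ 2`. -/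
noncomputable def betaSeq (a σ η s : ℝ) : ℕ → ℝ
  | 0 => 0
  | 1 => (σ ^ 2 * s ^ 2 - 2 * η * s) / 2
  | (ℓ + 2) =>
      ((a ^ 2 + 2 * σ ^ 2 * s * (-a + η)) * betaSeq a σ η s (ℓ + 1)
            + (σ ^ 2 * s ^ 2 - 2 * η * s) / 2)
        / (1 - 2 * σ ^ 2 * betaSeq a σ η s (ℓ + 1))

/-- The set `S_n⁻ = {s > 0 : β_ℓ < 1/(2σ²) for all 1 ≤ ℓ ≤ n}`. -/
def Sminus (a σ η : ℝ) (n : ℕ) : Set ℝ :=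
  {s : ℝ | 0 < s ∧ ∀ ℓ ∈ Finset.Icc 1 n, betaSeq a σ η s ℓ < 1 / (2 * σ ^ 2)}

/-- The maximum-likelihood estimate `â_ML(u₁ⁿ) = (Σ_{i=1}^{n−1} uᵢu_{i+1}) / (Σ_{i=1}^{n−1} uᵢ²)`. -/
noncomputable def aML {Ω : Type*} (U : ℕ → Ω → ℝ) (n : ℕ) (ω : Ω) : ℝ :=
  (∑ i ∈ Finset.Icc 1 (n - 1), U i ω * U (i + 1) ω)
    / (∑ i ∈ Finset.Icc 1 (n - 1), (U i ω) ^ 2)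


open Real

lemma rexp_eq_re {B b d x : ℝ} :
    rexp (B * x ^ 2 + b * x + d) = RCLike.re (Complex.exp ((B:ℂ) * x ^ 2 + b * x + d)) := by
  have h1 : ((B : ℂ) * x ^ 2 + b * x + d) = ((B * x ^ 2 + b * x + d : ℝ) : ℂ) := by push_cast; ring
  rw [h1, ← Complex.ofReal_exp]
  exact (RCLike.ofReal_re _).symm

lemma integrable_rexp_quadratic {B : ℝ} (hB : B < 0) (b d : ℝ) :
    Integrable (fun x : ℝ => rexp (B * x ^ 2 + b * x + d)) := by
  have h := (integrable_cexp_quadratic' (b := (B : ℂ)) (by simpa using hB) (b : ℂ) (d : ℂ)).re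
  exact h.congr (Filter.Eventually.of_forall fun x => rexp_eq_re.symm)

lemma integral_rexp_quadratic {B : ℝ} (hB : B < 0) (b d : ℝ) :
    ∫ x : ℝ, rexp (B * x ^ 2 + b * x + d)
      = (π / (-B)) ^ (1/2 : ℝ) * rexp (d - b ^ 2 / (4 * B)) := by
  have hB' : (0:ℝ) < -B := neg_pos.2 hB
  have h := integral_cexp_quadratic (b := (B : ℂ)) (by simpa using hB) (b : ℂ) (d : ℂ)
  have hR : ((π : ℂ) / -(B:ℂ)) ^ (1/2 : ℂ) * Complex.exp ((d:ℂ) - (b:ℂ)^2 / (4 * (B:ℂ)))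
      = (((π / (-B)) ^ (1/2 : ℝ) * rexp (d - b ^ 2 / (4 * B)) : ℝ) : ℂ) := by
    have h1 : ((π : ℂ) / -(B:ℂ)) = ((π / (-B) : ℝ) : ℂ) := by push_cast; ring
    have h2 : ((d:ℂ) - (b:ℂ)^2 / (4 * (B:ℂ))) = ((d - b ^ 2 / (4 * B) : ℝ) : ℂ) := by
      push_cast; ring
    have h3 : (1/2 : ℂ) = ((1/2 : ℝ) : ℂ) := by norm_num
    rw [h1, h2, h3, ← Complex.ofReal_exp,
      ← Complex.ofReal_cpow (div_nonneg pi_pos.le hB'.le), ← Complex.ofReal_mul]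
  have hint : Integrable (fun x : ℝ => Complex.exp ((B:ℂ) * x ^ 2 + b * x + d)) :=
    integrable_cexp_quadratic' (by simpa using hB) _ _
  have h2 := integral_re hint
  rw [h, hR] at h2
  calc ∫ x : ℝ, rexp (B * x ^ 2 + b * x + d)
      = ∫ x : ℝ, RCLike.re (Complex.exp ((B:ℂ) * x ^ 2 + b * x + d)) :=
        integral_congr_ae (Filter.Eventually.of_forall fun x => rexp_eq_re)
    _ = _ := by rw [h2]; exact RCLike.ofReal_re _

lemma gauss_quad {σ : ℝ} (hσ : 0 < σ) {c : ℝ} (hc : c < 1 / (2 * σ ^ 2)) (b d : ℝ) :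
    ∫⁻ t : ℝ, ENNReal.ofReal (rexp (c * t ^ 2 + b * t + d))
        ∂(gaussianReal 0 ⟨σ ^ 2, sq_nonneg σ⟩)
      = ENNReal.ofReal ((1 - 2 * σ ^ 2 * c) ^ (-(1/2 : ℝ))
          * rexp (d + σ ^ 2 * b ^ 2 / (2 * (1 - 2 * σ ^ 2 * c)))) := by
  set v : NNReal := ⟨σ ^ 2, sq_nonneg σ⟩ with hv
  have hσ2 : (0:ℝ) < σ ^ 2 := by positivity
  have hvne : v ≠ 0 := by
    intro h
    apply hσ2.ne'
    have := congrArg NNReal.toReal h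
    exact this
  have hvc : (v : ℝ) = σ ^ 2 := rfl
  set D : ℝ := 1 - 2 * σ ^ 2 * c with hD
  have hDpos : 0 < D := by
    have h1 : c * (2 * σ ^ 2) < 1 := (lt_div_iff₀ (by positivity)).mp hc
    rw [hD]; nlinarith
  have hDne : D ≠ 0 := hDpos.ne'
  set B : ℝ := c - 1 / (2 * σ ^ 2) with hBdef
  have hB : B < 0 := sub_neg.2 hc
  have hmeas : Measurable fun t : ℝ => ENNReal.ofReal (rexp (c * t ^ 2 + b * t + d)) := by
    fun_prop
  rw [gaussianReal_of_var_ne_zero 0 hvne,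
    lintegral_withDensity_eq_lintegral_mul _ (measurable_gaussianPDF 0 v) hmeas]
  have hpt : ∀ t : ℝ, (gaussianPDF 0 v * fun t => ENNReal.ofReal (rexp (c * t ^ 2 + b * t + d))) t
      = ENNReal.ofReal ((√(2 * π * σ ^ 2))⁻¹ * rexp (B * t ^ 2 + b * t + d)) := by
    intro t
    simp only [Pi.mul_apply, gaussianPDF, ← ENNReal.ofReal_mul (gaussianPDFReal_nonneg 0 v t)]
    congr 1
    have harg : -(t - 0) ^ 2 / (2 * σ ^ 2) + (c * t ^ 2 + b * t + d) = B * t ^ 2 + b * t + d := by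
      rw [hBdef]; field_simp; ring
    rw [gaussianPDFReal, hvc, mul_assoc, ← Real.exp_add, harg]
  simp only [hpt]
  rw [← ofReal_integral_eq_lintegral_ofReal
      ((integrable_rexp_quadratic hB b d).const_mul _)
      (Filter.Eventually.of_forall fun t => by positivity)]
  congr 1
  rw [integral_const_mul, integral_rexp_quadratic hB b d]
  have hBD : -B = D / (2 * σ ^ 2) := by
    rw [hBdef, hD]; field_simp; ring
  have h1 : π / (-B) = (2 * π * σ ^ 2) / D := by
    rw [hBD]; field_simp
  have h2 : d - b ^ 2 / (4 * B) = d + σ ^ 2 * b ^ 2 / (2 * D) := by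
    have : B = -(D / (2 * σ ^ 2)) := by rw [← hBD]; ring
    rw [this]; field_simp; ring
  rw [h1, h2, Real.div_rpow (by positivity) hDpos.le, Real.sqrt_eq_rpow]
  rw [Real.rpow_neg hDpos.le]
  have hA : ((2 * π * σ ^ 2 : ℝ) ^ ((1:ℝ) / 2)) ≠ 0 := by positivity
  have hDh : ((D : ℝ) ^ ((1:ℝ) / 2)) ≠ 0 := by positivity
  field_simp


lemma betaSeq_rec (a σ η s : ℝ) (j : ℕ)
    (hD : 1 - 2 * σ ^ 2 * betaSeq a σ η s j ≠ 0) :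
    betaSeq a σ η s (j + 1)
      = a ^ 2 * betaSeq a σ η s j - s * η
        + σ ^ 2 * (2 * a * betaSeq a σ η s j - s) ^ 2
            / (2 * (1 - 2 * σ ^ 2 * betaSeq a σ η s j)) := by
  match j with
  | 0 => simp only [betaSeq]; field_simp; ring
  | (j' + 1) =>
    show ((a ^ 2 + 2 * σ ^ 2 * s * (-a + η)) * betaSeq a σ η s (j' + 1)
            + (σ ^ 2 * s ^ 2 - 2 * η * s) / 2)
        / (1 - 2 * σ ^ 2 * betaSeq a σ η s (j' + 1)) = _
    field_simp
    ring

/-- The Gauss–Markov recursion as a function of the noise sequence. -/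
noncomputable def uSeq (a : ℝ) (z : ℕ → ℝ) : ℕ → ℝ
  | 0 => 0
  | (i + 1) => a * uSeq a z i + z (i + 1)

lemma uSeq_congr (a : ℝ) {z z' : ℕ → ℝ} (i : ℕ)
    (h : ∀ j, 1 ≤ j → j ≤ i → z j = z' j) : uSeq a z i = uSeq a z' i := by
  induction i with
  | zero => rfl
  | succ i ih =>
      show a * uSeq a z i + z (i + 1) = a * uSeq a z' i + z' (i + 1)
      rw [ih (fun j h1 h2 => h j h1 (h2.trans (Nat.le_succ i))),
        h (i + 1) (Nat.succ_le_succ (Nat.zero_le i)) le_rfl]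

lemma measurable_uSeq (a : ℝ) (i : ℕ) : Measurable (fun z : ℕ → ℝ => uSeq a z i) := by
  induction i with
  | zero => exact measurable_const
  | succ i ih =>
      exact ((ih.const_mul a).add (measurable_pi_apply (i + 1)))

/-- The exponent sum `∑_{i=1}^{m} (u_i z_{i+1} + η u_i²)`. -/
noncomputable def Efun (a η : ℝ) (m : ℕ) (z : ℕ → ℝ) : ℝ :=
  ∑ i ∈ Finset.Icc 1 m, (uSeq a z i * z (i + 1) + η * (uSeq a z i) ^ 2)

lemma Efun_congr (a η : ℝ) {z z' : ℕ → ℝ} (m : ℕ)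
    (h : ∀ j, 1 ≤ j → j ≤ m + 1 → z j = z' j) : Efun a η m z = Efun a η m z' := by
  refine Finset.sum_congr rfl fun i hi => ?_
  simp only [Finset.mem_Icc] at hi
  rw [uSeq_congr a i (fun j h1 h2 => h j h1 (h2.trans (hi.2.trans (Nat.le_succ m)))),
    h (i + 1) (Nat.succ_le_succ (Nat.zero_le i)) (Nat.succ_le_succ hi.2)]

lemma measurable_Efun (a η : ℝ) (m : ℕ) : Measurable (fun z : ℕ → ℝ => Efun a η m z) := by
  refine Finset.measurable_sum _ fun i _ => ?_
  exact ((measurable_uSeq a i).mul (measurable_pi_apply (i + 1))).add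
    (((measurable_uSeq a i).pow_const 2).const_mul η)

lemma Efun_update (a η : ℝ) (k : ℕ) (z : ℕ → ℝ) (t : ℝ) :
    Efun a η k (Function.update z (k + 1) t)
      = Efun a η (k - 1) z + (uSeq a z k * t + η * (uSeq a z k) ^ 2) := by
  match k with
  | 0 => simp [Efun, uSeq]
  | (k' + 1) =>
      have hupd : ∀ j, 1 ≤ j → j ≤ k' + 1 → Function.update z (k' + 2) t j = z j := by
        intro j _ h2
        exact Function.update_of_ne (by omega) _ _
      rw [Efun, Finset.sum_Icc_succ_top (Nat.le_add_left 1 k')]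
      congr 1
      · rw [← Efun]
        exact Efun_congr a η k' fun j h1 h2 => hupd j h1 h2
      · rw [uSeq_congr a (k' + 1) hupd, Function.update_self]

/-- Integrand after integrating out `Z_n, …, Z_{m+1}`. -/
noncomputable def Ffun (a σ η s : ℝ) (n m : ℕ) (z : ℕ → ℝ) : ℝ :=
  rexp (-s * Efun a η (m - 1) z + betaSeq a σ η s (n - m) * (uSeq a z m) ^ 2)

lemma Ffun_congr (a σ η s : ℝ) (n : ℕ) {m : ℕ} (hm : 1 ≤ m) {z z' : ℕ → ℝ}
    (h : ∀ j, 1 ≤ j → j ≤ m → z j = z' j) : Ffun a σ η s n m z = Ffun a σ η s n m z' := by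
  rw [Ffun, Ffun, Efun_congr a η (m - 1) (fun j h1 h2 => h j h1 (by omega)),
    uSeq_congr a m h]

lemma measurable_Ffun (a σ η s : ℝ) (n m : ℕ) :
    Measurable (fun z : ℕ → ℝ => Ffun a σ η s n m z) := by
  refine Real.measurable_exp.comp ?_
  exact ((measurable_Efun a η (m - 1)).const_mul (-s)).add
    (((measurable_uSeq a m).pow_const 2).const_mul _)

lemma step_lemma
    {Ω : Type*} [MeasurableSpace Ω] (μ : Measure Ω) [IsProbabilityMeasure μ]
    (a σ η s : ℝ) (hσ : 0 < σ)
    (Z : ℕ → Ω → ℝ) (hZmeas : ∀ i, Measurable (Z i))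
    (hZindep : iIndepFun Z μ)
    (hZlaw : ∀ i, Measure.map (Z i) μ = gaussianReal 0 ⟨σ ^ 2, sq_nonneg σ⟩)
    (n k : ℕ) (hk : k + 1 ≤ n)
    (hc : betaSeq a σ η s (n - (k + 1)) < 1 / (2 * σ ^ 2)) :
    ∫⁻ ω, ENNReal.ofReal (Ffun a σ η s n (k + 1) (fun j => Z j ω)) ∂μ
      = ENNReal.ofReal ((1 - 2 * σ ^ 2 * betaSeq a σ η s (n - (k + 1))) ^ (-(1/2 : ℝ)))
        * ∫⁻ ω, ENNReal.ofReal (Ffun a σ η s n k (fun j => Z j ω)) ∂μ := by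
  classical
  set c : ℝ := betaSeq a σ η s (n - (k + 1)) with hcdef
  have hσ2 : (0:ℝ) < σ ^ 2 := by positivity
  have hDpos : 0 < 1 - 2 * σ ^ 2 * c := by
    have h1 : c * (2 * σ ^ 2) < 1 := (lt_div_iff₀ (by positivity)).mp hc
    nlinarith
  set S : Finset ℕ := Finset.Icc 1 k with hSdef
  set Y : Ω → ({x // x ∈ S} → ℝ) := fun ω i => Z i ω with hYdef
  have hYmeas : Measurable Y := measurable_pi_lambda _ fun i => hZmeas i
  have hindep : IndepFun Y (Z (k + 1)) μ := by
    have hdisj : Disjoint S ({k + 1} : Finset ℕ) := by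
      simp only [Finset.disjoint_singleton_right, hSdef, Finset.mem_Icc]
      omega
    have h := hZindep.indepFun_finset S {k + 1} hdisj hZmeas
    have h2 := h.comp (measurable_id (α := {x // x ∈ S} → ℝ))
      (measurable_pi_apply (⟨k + 1, Finset.mem_singleton_self _⟩ : {x // x ∈ ({k+1}:Finset ℕ)}))
    exact h2
  set recon : ({x // x ∈ S} → ℝ) → ℕ → ℝ :=
    fun w j => if h : j ∈ S then w ⟨j, h⟩ else 0 with hrecon
  have hrecon_meas : Measurable recon := by
    refine measurable_pi_lambda _ fun j => ?_
    by_cases h : j ∈ S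
    · simpa [hrecon, h] using measurable_pi_apply (⟨j, h⟩ : {x // x ∈ S})
    · simpa [hrecon, h] using (measurable_const : Measurable fun _ : {x // x ∈ S} → ℝ => (0:ℝ))
  have hreconY : ∀ ω j, 1 ≤ j → j ≤ k → recon (Y ω) j = Z j ω := by
    intro ω j h1 h2
    have hj : j ∈ S := by simp [hSdef, Finset.mem_Icc]; omega
    simp [hrecon, hj, hYdef]
  set X : ({x // x ∈ S} → ℝ) → ℝ := fun w => uSeq a (recon w) k with hXdef
  have hXmeas : Measurable X := (measurable_uSeq a k).comp hrecon_meas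
  set dd : ({x // x ∈ S} → ℝ) → ℝ :=
    fun w => -s * Efun a η (k - 1) (recon w) - s * η * (X w) ^ 2 + c * a ^ 2 * (X w) ^ 2
    with hdddef
  have hddmeas : Measurable dd := by
    refine Measurable.add (Measurable.sub ?_ ?_) ?_
    · exact ((measurable_Efun a η (k - 1)).comp hrecon_meas).const_mul (-s)
    · exact (hXmeas.pow_const 2).const_mul (s * η)
    · exact (hXmeas.pow_const 2).const_mul (c * a ^ 2)
  set bb : ({x // x ∈ S} → ℝ) → ℝ := fun w => (2 * a * c - s) * X w with hbbdef
  have hbbmeas : Measurable bb := hXmeas.const_mul _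
  set H : ({x // x ∈ S} → ℝ) → ℝ → ℝ :=
    fun w t => rexp (c * t ^ 2 + bb w * t + dd w) with hHdef
  have hHmeas : Measurable (fun p : ({x // x ∈ S} → ℝ) × ℝ => ENNReal.ofReal (H p.1 p.2)) := by
    refine ENNReal.measurable_ofReal.comp (Real.measurable_exp.comp ?_)
    exact (((measurable_snd.pow_const 2).const_mul c).add
        ((hbbmeas.comp measurable_fst).mul measurable_snd)).add (hddmeas.comp measurable_fst)
  -- pointwise identification of `Ffun (k+1)` with `H ∘ (Y, Z (k+1))`
  have claimA : ∀ ω, Ffun a σ η s n (k + 1) (fun j => Z j ω) = H (Y ω) (Z (k + 1) ω) := by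
    intro ω
    set z : ℕ → ℝ := fun j => Z j ω with hz
    set t : ℝ := Z (k + 1) ω with ht
    set z' : ℕ → ℝ := Function.update (recon (Y ω)) (k + 1) t with hz'
    have h1 : Ffun a σ η s n (k + 1) z = Ffun a σ η s n (k + 1) z' := by
      refine Ffun_congr a σ η s n (Nat.succ_le_succ (Nat.zero_le k)) fun j hj1 hj2 => ?_
      rcases Nat.lt_or_ge j (k + 1) with hlt | hge
      · rw [hz', Function.update_of_ne (by omega)]
        exact (hreconY ω j hj1 (by omega)).symm
      · have : j = k + 1 := by omega
        rw [this, hz', Function.update_self]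
    have hu : uSeq a z' (k + 1) = a * X (Y ω) + t := by
      show a * uSeq a z' k + z' (k + 1) = _
      rw [hz', Function.update_self]
      congr 2
      exact uSeq_congr a k fun j h1 h2 => Function.update_of_ne (by omega) _ _
    have hE : Efun a η k z' = Efun a η (k - 1) (recon (Y ω))
        + (X (Y ω) * t + η * (X (Y ω)) ^ 2) := Efun_update a η k (recon (Y ω)) t
    rw [h1, Ffun]
    have hnk : n - (k + 1) = n - (k + 1) := rfl
    show rexp (-s * Efun a η k z' + c * (uSeq a z' (k + 1)) ^ 2) = H (Y ω) t
    rw [hu, hE, hHdef, hbbdef, hdddef]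
    congr 1
    ring
  -- pointwise identification of the result of the inner integral with `Ffun k`
  have claimB : ∀ ω, rexp (dd (Y ω) + σ ^ 2 * (bb (Y ω)) ^ 2 / (2 * (1 - 2 * σ ^ 2 * c)))
      = Ffun a σ η s n k (fun j => Z j ω) := by
    intro ω
    have hE : Efun a η (k - 1) (recon (Y ω)) = Efun a η (k - 1) (fun j => Z j ω) := by
      match k with
      | 0 => simp [Efun]
      | (k' + 1) =>
          exact Efun_congr a η k' fun j h1 h2 => hreconY ω j h1 (by omega)
    have hX : X (Y ω) = uSeq a (fun j => Z j ω) k :=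
      uSeq_congr a k fun j h1 h2 => hreconY ω j h1 h2
    have hrec : betaSeq a σ η s (n - k)
        = a ^ 2 * c - s * η + σ ^ 2 * (2 * a * c - s) ^ 2 / (2 * (1 - 2 * σ ^ 2 * c)) := by
      have hnk : n - k = (n - (k + 1)) + 1 := by omega
      rw [hnk, betaSeq_rec a σ η s (n - (k + 1)) hDpos.ne', hcdef]
    simp only [Ffun, hbbdef, hdddef]
    rw [hE, hX, hrec]
    congr 1
    have hD : (1 - 2 * σ ^ 2 * c) ≠ 0 := hDpos.ne'
    field_simp
    ring
  have hmapZ : μ.map (Z (k + 1)) = gaussianReal 0 ⟨σ ^ 2, sq_nonneg σ⟩ := hZlaw (k + 1)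
  have hprod : μ.map (fun ω => (Y ω, Z (k + 1) ω)) = (μ.map Y).prod (μ.map (Z (k + 1))) :=
    (indepFun_iff_map_prod_eq_prod_map_map hYmeas.aemeasurable
      (hZmeas (k + 1)).aemeasurable).mp hindep
  have hmeas1 : Measurable fun w : {x // x ∈ S} → ℝ =>
      ENNReal.ofReal (rexp (dd w + σ ^ 2 * (bb w) ^ 2 / (2 * (1 - 2 * σ ^ 2 * c)))) := by
    refine ENNReal.measurable_ofReal.comp (Real.measurable_exp.comp ?_)
    exact hddmeas.add (((hbbmeas.pow_const 2).const_mul (σ ^ 2)).div_const _)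
  have hK : (0:ℝ) ≤ (1 - 2 * σ ^ 2 * c) ^ (-(1/2 : ℝ)) := Real.rpow_nonneg hDpos.le _
  calc
    ∫⁻ ω, ENNReal.ofReal (Ffun a σ η s n (k + 1) (fun j => Z j ω)) ∂μ
        = ∫⁻ ω, ENNReal.ofReal (H (Y ω) (Z (k + 1) ω)) ∂μ :=
          lintegral_congr fun ω => by rw [claimA ω]
    _ = ∫⁻ p, ENNReal.ofReal (H p.1 p.2) ∂(μ.map (fun ω => (Y ω, Z (k + 1) ω))) :=
          (lintegral_map hHmeas (hYmeas.prodMk (hZmeas (k + 1)))).symm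
    _ = ∫⁻ p, ENNReal.ofReal (H p.1 p.2)
          ∂((μ.map Y).prod (gaussianReal 0 ⟨σ ^ 2, sq_nonneg σ⟩)) := by
          rw [hprod, hmapZ]
    _ = ∫⁻ w, ∫⁻ t, ENNReal.ofReal (H w t) ∂(gaussianReal 0 ⟨σ ^ 2, sq_nonneg σ⟩)
          ∂(μ.map Y) := by
            haveI := instIsProbabilityMeasureGaussianReal 0 ⟨σ ^ 2, sq_nonneg σ⟩
            exact lintegral_prod _ hHmeas.aemeasurable
    _ = ∫⁻ w, ENNReal.ofReal ((1 - 2 * σ ^ 2 * c) ^ (-(1/2 : ℝ))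
          * rexp (dd w + σ ^ 2 * (bb w) ^ 2 / (2 * (1 - 2 * σ ^ 2 * c)))) ∂(μ.map Y) :=
          lintegral_congr fun w => gauss_quad hσ hc (bb w) (dd w)
    _ = ENNReal.ofReal ((1 - 2 * σ ^ 2 * c) ^ (-(1/2 : ℝ)))
          * ∫⁻ w, ENNReal.ofReal (rexp (dd w + σ ^ 2 * (bb w) ^ 2
              / (2 * (1 - 2 * σ ^ 2 * c)))) ∂(μ.map Y) := by
          simp_rw [ENNReal.ofReal_mul hK]
          exact lintegral_const_mul _ hmeas1
    _ = ENNReal.ofReal ((1 - 2 * σ ^ 2 * c) ^ (-(1/2 : ℝ)))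
          * ∫⁻ ω, ENNReal.ofReal (rexp (dd (Y ω) + σ ^ 2 * (bb (Y ω)) ^ 2
              / (2 * (1 - 2 * σ ^ 2 * c)))) ∂μ := by
          rw [lintegral_map hmeas1 hYmeas]
    _ = ENNReal.ofReal ((1 - 2 * σ ^ 2 * c) ^ (-(1/2 : ℝ)))
          * ∫⁻ ω, ENNReal.ofReal (Ffun a σ η s n k (fun j => Z j ω)) ∂μ := by
          congr 1
          exact lintegral_congr fun ω => by rw [claimB ω]

lemma iter_lemma
    {Ω : Type*} [MeasurableSpace Ω] (μ : Measure Ω) [IsProbabilityMeasure μ]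
    (a σ η s : ℝ) (hσ : 0 < σ)
    (Z : ℕ → Ω → ℝ) (hZmeas : ∀ i, Measurable (Z i))
    (hZindep : iIndepFun Z μ)
    (hZlaw : ∀ i, Measure.map (Z i) μ = gaussianReal 0 ⟨σ ^ 2, sq_nonneg σ⟩)
    (n : ℕ) (hβ : ∀ ℓ, ℓ ≤ n → betaSeq a σ η s ℓ < 1 / (2 * σ ^ 2)) :
    ∀ k, k ≤ n → ∫⁻ ω, ENNReal.ofReal (Ffun a σ η s n k (fun j => Z j ω)) ∂μ
      = ∏ j ∈ Finset.range k,
          ENNReal.ofReal ((1 - 2 * σ ^ 2 * betaSeq a σ η s (n - 1 - j)) ^ (-(1/2 : ℝ))) := by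
  intro k
  induction k with
  | zero =>
      intro _
      have h0 : ∀ ω : Ω, Ffun a σ η s n 0 (fun j => Z j ω) = 1 := by
        intro ω
        simp [Ffun, Efun, uSeq]
      simp only [h0, ENNReal.ofReal_one, lintegral_one, measure_univ, Finset.range_zero,
        Finset.prod_empty]
  | succ k ih =>
      intro hk1
      have hk : k ≤ n := le_of_lt hk1
      have hc : betaSeq a σ η s (n - (k + 1)) < 1 / (2 * σ ^ 2) := hβ _ (Nat.sub_le n (k + 1))
      rw [step_lemma μ a σ η s hσ Z hZmeas hZindep hZlaw n k hk1 hc, ih hk,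
        Finset.prod_range_succ]
      have hidx : n - 1 - k = n - (k + 1) := by omega
      rw [hidx, mul_comm]

theorem statement1
    {Ω : Type*} [MeasurableSpace Ω] (μ : Measure Ω) [IsProbabilityMeasure μ]
    (a σ : ℝ) (ha : 1 < a) (hσ : 0 < σ)
    (Z : ℕ → Ω → ℝ) (hZmeas : ∀ i, Measurable (Z i))
    (hZindep : iIndepFun Z μ)
    (hZlaw : ∀ i, Measure.map (Z i) μ = gaussianReal 0 ⟨σ ^ 2, sq_nonneg σ⟩)
    (U : ℕ → Ω → ℝ) (hU0 : U 0 = fun _ => 0)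
    (hU : ∀ i, U (i + 1) = fun ω => a * U i ω + Z (i + 1) ω)
    (η : ℝ) (hη : 0 < η) (n : ℕ) (hn : 2 ≤ n)
    (s : ℝ) (hs : s ∈ Sminus a σ η n) :
    (μ {ω | aML U n ω - a < -η}).toReal
      ≤ ∏ ℓ ∈ Finset.Icc 1 (n - 1), (1 - 2 * σ ^ 2 * betaSeq a σ η s ℓ) ^ (-(1 / 2 : ℝ)) := by
  obtain ⟨hspos, hsβ⟩ := hs
  have hσ2 : (0:ℝ) < σ ^ 2 := by positivity
  have hβ : ∀ ℓ, ℓ ≤ n → betaSeq a σ η s ℓ < 1 / (2 * σ ^ 2) := by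
    intro ℓ hℓ
    match ℓ with
    | 0 => show (0:ℝ) < 1 / (2 * σ ^ 2); positivity
    | (ℓ' + 1) => exact hsβ _ (Finset.mem_Icc.mpr ⟨Nat.succ_le_succ (Nat.zero_le _), hℓ⟩)
  have hDpos : ∀ ℓ, ℓ ≤ n → 0 < 1 - 2 * σ ^ 2 * betaSeq a σ η s ℓ := by
    intro ℓ hℓ
    have h1 : betaSeq a σ η s ℓ * (2 * σ ^ 2) < 1 := (lt_div_iff₀ (by positivity)).mp (hβ ℓ hℓ)
    nlinarith
  have hUZ : ∀ i ω, U i ω = uSeq a (fun j => Z j ω) i := by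
    intro i
    induction i with
    | zero => intro ω; rw [hU0]; rfl
    | succ i ih => intro ω; rw [hU i]; show a * U i ω + Z (i + 1) ω = _
                   rw [ih ω]; rfl
  have hU1 : ∀ ω, U 1 ω = Z 1 ω := by
    intro ω
    rw [hU 0]
    show a * U 0 ω + Z 1 ω = Z 1 ω
    rw [hU0]
    show a * 0 + Z 1 ω = Z 1 ω
    ring
  -- the bad event is contained in {Efun < 0} ∪ {Z 1 = 0}
  set A : Set Ω := {ω | Efun a η (n - 1) (fun j => Z j ω) < 0} with hAdef
  have hAmeas : MeasurableSet A := by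
    have : Measurable fun ω => Efun a η (n - 1) (fun j => Z j ω) :=
      (measurable_Efun a η (n - 1)).comp (measurable_pi_lambda _ fun j => hZmeas j)
    exact measurableSet_lt this measurable_const
  have hsub : {ω | aML U n ω - a < -η} ⊆ A ∪ {ω | Z 1 ω = 0} := by
    intro ω hω
    by_cases hz1 : Z 1 ω = 0
    · exact Or.inr hz1
    refine Or.inl ?_
    have h1mem : 1 ∈ Finset.Icc 1 (n - 1) := Finset.mem_Icc.mpr ⟨le_rfl, by omega⟩
    set DS : ℝ := ∑ i ∈ Finset.Icc 1 (n - 1), (U i ω) ^ 2 with hDS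
    have hDSpos : 0 < DS := by
      refine Finset.sum_pos' (fun i _ => sq_nonneg _) ⟨1, h1mem, ?_⟩
      have : U 1 ω ≠ 0 := by rw [hU1 ω]; exact hz1
      positivity
    set SZ : ℝ := ∑ i ∈ Finset.Icc 1 (n - 1), U i ω * Z (i + 1) ω with hSZ
    have hNum : ∑ i ∈ Finset.Icc 1 (n - 1), U i ω * U (i + 1) ω = a * DS + SZ := by
      rw [hDS, hSZ, Finset.mul_sum, ← Finset.sum_add_distrib]
      refine Finset.sum_congr rfl fun i _ => ?_
      rw [hU i]
      show U i ω * (a * U i ω + Z (i + 1) ω) = _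
      ring
    have hEf : Efun a η (n - 1) (fun j => Z j ω) = SZ + η * DS := by
      rw [Efun, hSZ, hDS, Finset.mul_sum, ← Finset.sum_add_distrib]
      refine Finset.sum_congr rfl fun i _ => ?_
      rw [← hUZ i ω]
    have hω' : aML U n ω - a < -η := hω
    rw [aML, hNum] at hω'
    have h2 : (a * DS + SZ) / DS < a - η := by linarith
    have h3 : a * DS + SZ < (a - η) * DS := (div_lt_iff₀ hDSpos).mp h2
    show Efun a η (n - 1) (fun j => Z j ω) < 0
    rw [hEf]
    nlinarith
  have hZ10 : μ {ω | Z 1 ω = 0} = 0 := by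
    have h1 : μ {ω | Z 1 ω = 0} = (μ.map (Z 1)) {(0:ℝ)} := by
      rw [Measure.map_apply (hZmeas 1) (measurableSet_singleton 0)]
      rfl
    rw [h1, hZlaw 1]
    have habs := gaussianReal_absolutelyContinuous (μ := 0) (v := ⟨σ ^ 2, sq_nonneg σ⟩)
      (by intro h; apply hσ2.ne'; have := congrArg NNReal.toReal h; exact this)
    exact habs (measure_singleton 0)
  -- Chernoff bound
  have hchern : μ A ≤ ∫⁻ ω, ENNReal.ofReal (Ffun a σ η s n n (fun j => Z j ω)) ∂μ := by
    rw [← lintegral_indicator_one hAmeas]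
    refine lintegral_mono fun ω => ?_
    by_cases hω : ω ∈ A
    · rw [Set.indicator_of_mem hω]
      have hEf : Efun a η (n - 1) (fun j => Z j ω) < 0 := hω
      have hexp : (1:ℝ) ≤ Ffun a σ η s n n (fun j => Z j ω) := by
        rw [Ffun, Nat.sub_self]
        show (1:ℝ) ≤ rexp (-s * Efun a η (n - 1) (fun j => Z j ω) + 0 * _ ^ 2)
        rw [← Real.exp_zero]
        apply Real.exp_le_exp.mpr
        nlinarith
      exact ENNReal.one_le_ofReal.mpr hexp
    · rw [Set.indicator_of_notMem hω]
      exact zero_le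
  have hiter := iter_lemma μ a σ η s hσ Z hZmeas hZindep hZlaw n hβ n le_rfl
  -- rewrite the product
  set g : ℕ → ℝ := fun ℓ => (1 - 2 * σ ^ 2 * betaSeq a σ η s ℓ) ^ (-(1/2 : ℝ)) with hg
  have hprod : ∏ j ∈ Finset.range n, ENNReal.ofReal (g (n - 1 - j))
      = ENNReal.ofReal (∏ ℓ ∈ Finset.Icc 1 (n - 1), g ℓ) := by
    rw [Finset.prod_range_reflect (fun j => ENNReal.ofReal (g j)) n]
    have h0 : ENNReal.ofReal (g 0) = 1 := by
      have : g 0 = 1 := by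
        rw [hg]
        show (1 - 2 * σ ^ 2 * betaSeq a σ η s 0) ^ (-(1/2 : ℝ)) = 1
        show (1 - 2 * σ ^ 2 * (0:ℝ)) ^ (-(1/2 : ℝ)) = 1
        rw [mul_zero, sub_zero, Real.one_rpow]
      rw [this, ENNReal.ofReal_one]
    have hsplit : Finset.range n = insert 0 (Finset.Icc 1 (n - 1)) := by
      ext x
      simp only [Finset.mem_range, Finset.mem_insert, Finset.mem_Icc]
      omega
    rw [hsplit, Finset.prod_insert (by simp), h0, one_mul]
    exact (ENNReal.ofReal_prod_of_nonneg fun i hi =>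
      Real.rpow_nonneg (hDpos i (by simp only [Finset.mem_Icc] at hi; omega)).le _).symm
  have hfinal : μ {ω | aML U n ω - a < -η}
      ≤ ENNReal.ofReal (∏ ℓ ∈ Finset.Icc 1 (n - 1), g ℓ) := by
    calc μ {ω | aML U n ω - a < -η} ≤ μ (A ∪ {ω | Z 1 ω = 0}) := measure_mono hsub
      _ ≤ μ A + μ {ω | Z 1 ω = 0} := measure_union_le _ _
      _ = μ A := by rw [hZ10, add_zero]
      _ ≤ _ := by rw [← hprod, ← hiter]; exact hchern
  refine ENNReal.toReal_le_of_le_ofReal ?_ hfinal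
  exact Finset.prod_nonneg fun i hi =>
    Real.rpow_nonneg (hDpos i (by simp only [Finset.mem_Icc] at hi; omega)).le _
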